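/- In a closed symmetric monoidal category, an object x is dualizable if and only if x is reflexive and its dual Dx is dualizable. -/

import Mathlib

set_option linter.unusedSectionVars false


open CategoryTheory CategoryTheory.MonoidalCategory CategoryTheory.MonoidalClosed

universe v u

variable {C : Type u} [Category.{v} C] [MonoidalCategory C] [SymmetricCategory C]
  [MonoidalClosed C]

/-- The internal dual `D x = hom(x, 𝟙)`. -/
noncomputable def dualObj (x : C) : C := (ihom x).obj (𝟙_ C)

/-- The action of the dual functor on morphisms. -/
noncomputable def dualMap {x y : C} (f : x ⟶ y) : dualObj y ⟶ dualObj x :=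
  (MonoidalClosed.pre f).app (𝟙_ C)

/-- The evaluation morphism `ε : D x ⊗ x ⟶ 𝟙`. -/
noncomputable def epsilonMap (x : C) : dualObj x ⊗ x ⟶ 𝟙_ C :=
  (β_ (dualObj x) x).hom ≫ (ihom.ev x).app (𝟙_ C)

/-- The canonical map `eval_x : x ⟶ D (D x)`. -/
noncomputable def evalMap (x : C) : x ⟶ dualObj (dualObj x) :=
  MonoidalClosed.curry (epsilonMap x)

/-- `x` is dualizable: there is a coevaluation `c : 𝟙 ⟶ x ⊗ D x` satisfying the two
triangle (zigzag) identities with the evaluation `ε : D x ⊗ x ⟶ 𝟙`. -/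
def Dualizable (x : C) : Prop :=
  ∃ c : 𝟙_ C ⟶ x ⊗ dualObj x,
    (λ_ x).inv ≫ (c ▷ x) ≫ (α_ x (dualObj x) x).hom ≫ (x ◁ epsilonMap x) ≫ (ρ_ x).hom =
      𝟙 x ∧
    (ρ_ (dualObj x)).inv ≫ (dualObj x ◁ c) ≫ (α_ (dualObj x) x (dualObj x)).inv ≫
      (epsilonMap x ▷ dualObj x) ≫ (λ_ (dualObj x)).hom = 𝟙 (dualObj x)

/-- The "straight" evaluation `x ⊗ D x ⟶ 𝟙` with a clean type. -/
noncomputable def vE (x : C) : x ⊗ dualObj x ⟶ 𝟙_ C := (ihom.ev x).app (𝟙_ C)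

lemma epsilonMap_eq (x : C) : epsilonMap x = (β_ (dualObj x) x).hom ≫ vE x := rfl

lemma whiskerLeft_evalMap_vE (x : C) :
    (dualObj x ◁ evalMap x) ≫ vE (dualObj x) = epsilonMap x := by
  have h := MonoidalClosed.uncurry_curry (epsilonMap x)
  rw [uncurry_eq] at h
  exact h

lemma braid_eps (x : C) :
    (β_ x (dualObj x)).hom ≫ epsilonMap x = vE x := by
  rw [epsilonMap_eq, ← Category.assoc, SymmetricCategory.symmetry, Category.id_comp]

lemma evalMap_whiskerRight_eps (x : C) :
    (evalMap x ▷ dualObj x) ≫ epsilonMap (dualObj x) = (β_ x (dualObj x)).hom ≫ epsilonMap x := by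
  rw [epsilonMap_eq (dualObj x), ← Category.assoc,
    BraidedCategory.braiding_naturality_left, Category.assoc, whiskerLeft_evalMap_vE]

lemma evalMap_whiskerRight_eps' (x : C) :
    (evalMap x ▷ dualObj x) ≫ epsilonMap (dualObj x) = vE x := by
  rw [evalMap_whiskerRight_eps, braid_eps]

lemma form1 {X Y : C} {c : 𝟙_ C ⟶ X ⊗ Y} {e : Y ⊗ X ⟶ 𝟙_ C}
    (h : c ▷ X ≫ (α_ X Y X).hom ≫ X ◁ e = (λ_ X).hom ≫ (ρ_ X).inv) :
    (λ_ X).inv ≫ c ▷ X ≫ (α_ X Y X).hom ≫ (X ◁ e) ≫ (ρ_ X).hom = 𝟙 X := by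
  rw [reassoc_of% h]; simp

lemma form1' {X Y : C} {c : 𝟙_ C ⟶ X ⊗ Y} {e : Y ⊗ X ⟶ 𝟙_ C}
    (h : (λ_ X).inv ≫ c ▷ X ≫ (α_ X Y X).hom ≫ (X ◁ e) ≫ (ρ_ X).hom = 𝟙 X) :
    c ▷ X ≫ (α_ X Y X).hom ≫ X ◁ e = (λ_ X).hom ≫ (ρ_ X).inv := by
  rw [← cancel_epi (λ_ X).inv, ← cancel_mono (ρ_ X).hom]; simpa using h

lemma form2 {X Y : C} {c : 𝟙_ C ⟶ X ⊗ Y} {e : Y ⊗ X ⟶ 𝟙_ C}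
    (h : Y ◁ c ≫ (α_ Y X Y).inv ≫ e ▷ Y = (ρ_ Y).hom ≫ (λ_ Y).inv) :
    (ρ_ Y).inv ≫ (Y ◁ c) ≫ (α_ Y X Y).inv ≫ (e ▷ Y) ≫ (λ_ Y).hom = 𝟙 Y := by
  rw [reassoc_of% h]; simp

lemma form2' {X Y : C} {c : 𝟙_ C ⟶ X ⊗ Y} {e : Y ⊗ X ⟶ 𝟙_ C}
    (h : (ρ_ Y).inv ≫ (Y ◁ c) ≫ (α_ Y X Y).inv ≫ (e ▷ Y) ≫ (λ_ Y).hom = 𝟙 Y) :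
    Y ◁ c ≫ (α_ Y X Y).inv ≫ e ▷ Y = (ρ_ Y).hom ≫ (λ_ Y).inv := by
  rw [← cancel_epi (ρ_ Y).inv, ← cancel_mono (λ_ Y).hom]; simpa using h

lemma isIso_evalMap_of (x : C) (c : 𝟙_ C ⟶ x ⊗ dualObj x)
    (h1 : (λ_ x).inv ≫ (c ▷ x) ≫ (α_ x (dualObj x) x).hom ≫ (x ◁ epsilonMap x) ≫ (ρ_ x).hom =
      𝟙 x)
    (h2 : (ρ_ (dualObj x)).inv ≫ (dualObj x ◁ c) ≫ (α_ (dualObj x) x (dualObj x)).inv ≫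
      (epsilonMap x ▷ dualObj x) ≫ (λ_ (dualObj x)).hom = 𝟙 (dualObj x)) :
    IsIso (evalMap x) := by
  have h2' := form2' h2
  refine ⟨(λ_ (dualObj (dualObj x))).inv ≫ (c ▷ dualObj (dualObj x)) ≫
      (α_ x (dualObj x) (dualObj (dualObj x))).hom ≫ (x ◁ vE (dualObj x)) ≫ (ρ_ x).hom, ?_, ?_⟩
  · calc evalMap x ≫ (λ_ (dualObj (dualObj x))).inv ≫ (c ▷ dualObj (dualObj x)) ≫
        (α_ x (dualObj x) (dualObj (dualObj x))).hom ≫ (x ◁ vE (dualObj x)) ≫ (ρ_ x).hom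
        = 𝟙 x ⊗≫ ((𝟙_ C ◁ evalMap x) ≫ (c ▷ dualObj (dualObj x))) ⊗≫
            (x ◁ vE (dualObj x)) ⊗≫ 𝟙 x := by
          monoidal
      _ = 𝟙 x ⊗≫ (c ▷ x) ⊗≫ (x ◁ ((dualObj x ◁ evalMap x) ≫ vE (dualObj x))) ⊗≫ 𝟙 x := by
          rw [whisker_exchange]; monoidal
      _ = (λ_ x).inv ≫ (c ▷ x) ≫ (α_ x (dualObj x) x).hom ≫ (x ◁ epsilonMap x) ≫ (ρ_ x).hom := by
          rw [whiskerLeft_evalMap_vE]; monoidal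
      _ = 𝟙 x := h1
  · have key : (dualObj x ◁ ((λ_ (dualObj (dualObj x))).inv ≫ (c ▷ dualObj (dualObj x)) ≫
        (α_ x (dualObj x) (dualObj (dualObj x))).hom ≫ (x ◁ vE (dualObj x)) ≫ (ρ_ x).hom)) ≫
        epsilonMap x = vE (dualObj x) := by
      calc _ = 𝟙 _ ⊗≫ (dualObj x ◁ (c ▷ dualObj (dualObj x))) ⊗≫
            (((dualObj x ⊗ x) ◁ vE (dualObj x)) ≫ (epsilonMap x ▷ 𝟙_ C)) ⊗≫ 𝟙 (𝟙_ C) := by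
            monoidal
        _ = 𝟙 _ ⊗≫ (dualObj x ◁ (c ▷ dualObj (dualObj x))) ⊗≫
            ((epsilonMap x ▷ (dualObj x ⊗ dualObj (dualObj x))) ≫ (𝟙_ C ◁ vE (dualObj x))) ⊗≫
            𝟙 (𝟙_ C) := by
            rw [← whisker_exchange]
        _ = 𝟙 _ ⊗≫ (((dualObj x ◁ c) ≫ (α_ (dualObj x) x (dualObj x)).inv ≫
              (epsilonMap x ▷ dualObj x)) ▷ dualObj (dualObj x)) ⊗≫ vE (dualObj x) := by
            monoidal
        _ = 𝟙 _ ⊗≫ (((ρ_ (dualObj x)).hom ≫ (λ_ (dualObj x)).inv) ▷ dualObj (dualObj x)) ⊗≫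
            vE (dualObj x) := by
            rw [h2']
        _ = vE (dualObj x) := by monoidal
    rw [show evalMap x = MonoidalClosed.curry (epsilonMap x) from rfl]
    refine (curry_natural_left _ _).symm.trans ?_
    refine (curry_eq_iff _ _).mpr ?_
    rw [key]
    rw [show vE (dualObj x) = (ihom.ev (dualObj x)).app (𝟙_ C) from rfl]
    dsimp only [dualObj]
    exact (uncurry_id_eq_ev _ _).symm

/-- `x` is dualizable iff `x` is reflexive and `D x` is dualizable. -/
theorem stmt8 (x : C) :
    Dualizable x ↔ (IsIso (evalMap x) ∧ Dualizable (dualObj x)) := by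
  constructor
  · rintro ⟨c, h1, h2⟩
    have hiso : IsIso (evalMap x) := isIso_evalMap_of x c h1 h2
    refine ⟨hiso, ?_⟩
    letI p : ExactPairing x (dualObj x) := ⟨c, epsilonMap x, form2' h2, form1' h1⟩
    letI q : ExactPairing (dualObj x) x := BraidedCategory.exactPairing_swap x (dualObj x)
    letI r : ExactPairing (dualObj x) (dualObj (dualObj x)) :=
      exactPairingCongrRight (asIso (evalMap x)).symm
    have hev : ε_ (dualObj x) (dualObj (dualObj x)) = epsilonMap (dualObj x) := by
      show (asIso (evalMap x)).symm.hom ▷ dualObj x ≫ ((β_ x (dualObj x)).hom ≫ epsilonMap x) =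
        epsilonMap (dualObj x)
      rw [braid_eps, ← evalMap_whiskerRight_eps' x, ← Category.assoc, ← comp_whiskerRight]
      simp
    have e1 := ExactPairing.evaluation_coevaluation (dualObj x) (dualObj (dualObj x))
    have e2 := ExactPairing.coevaluation_evaluation (dualObj x) (dualObj (dualObj x))
    rw [hev] at e1 e2
    exact ⟨η_ (dualObj x) (dualObj (dualObj x)), form1 e1, form2 e2⟩
  · rintro ⟨hiso, c', h1', h2'⟩
    letI p' : ExactPairing (dualObj x) (dualObj (dualObj x)) :=
      ⟨c', epsilonMap (dualObj x), form2' h2', form1' h1'⟩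
    letI s : ExactPairing (dualObj (dualObj x)) (dualObj x) :=
      BraidedCategory.exactPairing_swap (dualObj x) (dualObj (dualObj x))
    letI t : ExactPairing x (dualObj x) := exactPairingCongrLeft (asIso (evalMap x))
    have hev : ε_ x (dualObj x) = epsilonMap x := by
      show (dualObj x ◁ (asIso (evalMap x)).hom) ≫
        ((β_ (dualObj x) (dualObj (dualObj x))).hom ≫ epsilonMap (dualObj x)) = epsilonMap x
      rw [← Category.assoc, asIso_hom, BraidedCategory.braiding_naturality_right,
        Category.assoc, evalMap_whiskerRight_eps', epsilonMap_eq]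
    have e1 := ExactPairing.evaluation_coevaluation x (dualObj x)
    have e2 := ExactPairing.coevaluation_evaluation x (dualObj x)
    rw [hev] at e1 e2
    exact ⟨η_ x (dualObj x), form1 e1, form2 e2⟩
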